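/- Let p be a prime, f : ℤ_p → ℤ_p a 1-Lipschitz function, x an integer with 0 ≤ x < p, and h the section of f at the vertex (1, x). Then the reduced van der Put coefficients of h satisfy: b^h_0 = σ(b^f_x); b^h_n = b^f_{x + n·p} + σ(b^f_x) for every integer n with 1 ≤ n ≤ p − 1; and b^h_n = b^f_{x + n·p} for every integer n ≥ p. -/

import Mathlib

/-- The van der Put coefficients of `f : ℤ_p → ℤ_p`:
`B^f_n = f(n)` for `0 ≤ n < p` and `B^f_n = f(n) - f(n mod p^⌊log_p n⌋)` for `n ≥ p`. -/
noncomputable def vdpB (p : ℕ) [Fact p.Prime] (f : PadicInt p → PadicInt p) (n : ℕ) :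
    PadicInt p :=
  if n < p then f n else f n - f ((n % p ^ Nat.log p n : ℕ))

/-- Reduced van der Put coefficients of the section of a 1-Lipschitz map at a first-level
vertex `x` (with `0 ≤ x < p`):
`b^h_0 = σ(b^f_x)`, `b^h_n = b^f_{x+np} + σ(b^f_x)` for `1 ≤ n ≤ p-1`, and
`b^h_n = b^f_{x+np}` for `n ≥ p`, where `σ` is the digit shift on `ℤ_p`. -/
lemma digit_unique {p : ℕ} [Fact p.Prime] {r r' : ℕ} (hr : r < p) (hr' : r' < p)
    {a b : PadicInt p} (hEq : (r : PadicInt p) + p * a = (r' : PadicInt p) + p * b) : a = b := by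
  have hp := (Fact.out : p.Prime)
  have hpne : (p : PadicInt p) ≠ 0 := Nat.cast_ne_zero.mpr hp.ne_zero
  have hcast : (((r : ℤ) - r' : ℤ) : PadicInt p) = (p : PadicInt p) * (b - a) := by
    push_cast
    linear_combination hEq
  have hdvd : (p : ℤ) ∣ ((r : ℤ) - r') := by
    rw [← PadicInt.norm_int_lt_one_iff_dvd, hcast]
    calc ‖(p : PadicInt p) * (b - a)‖ ≤ ‖(p : PadicInt p)‖ * 1 := by
          rw [norm_mul]; gcongr; exact PadicInt.norm_le_one _
      _ < 1 := by
          rw [mul_one, PadicInt.norm_p]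
          have : (1:ℝ) < p := by exact_mod_cast hp.one_lt
          exact inv_lt_one_of_one_lt₀ this
  have hrr : r = r' := by
    have habs : |(r : ℤ) - r'| < p := by
      rw [abs_lt]; constructor <;> [simp; skip] <;> omega
    have := Int.eq_zero_of_abs_lt_dvd hdvd habs
    omega
  subst hrr
  have : (p : PadicInt p) * a = (p : PadicInt p) * b := by linear_combination hEq
  exact mul_left_cancel₀ hpne this

theorem reduced_vanDerPut_of_section_level_one (p : ℕ) [Fact p.Prime]
    (f h : PadicInt p → PadicInt p)
    (hf : ∀ x y : PadicInt p, ‖f x - f y‖ ≤ ‖x - y‖)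
    (x : ℕ) (hx : x < p)
    -- `h` is the section of `f` at the vertex `(1, x)`
    (hsec : ∃ r : ℕ, r < p ∧ ∀ y : PadicInt p,
      f ((x : PadicInt p) + (p : PadicInt p) * y)
        = (r : PadicInt p) + (p : PadicInt p) * h y)
    -- `σ` is the digit shift on `ℤ_p`
    (σ : PadicInt p → PadicInt p)
    (hσ : ∀ a : PadicInt p, ∃ r : ℕ, r < p ∧ a = (r : PadicInt p) + (p : PadicInt p) * σ a)
    -- reduced van der Put coefficients of `f` and of `h`
    (bf bh : ℕ → PadicInt p)
    (hbf : ∀ n : ℕ, (p : PadicInt p) ^ Nat.log p n * bf n = vdpB p f n)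
    (hbh : ∀ n : ℕ, (p : PadicInt p) ^ Nat.log p n * bh n = vdpB p h n) :
    bh 0 = σ (bf x) ∧
    (∀ n : ℕ, 1 ≤ n → n ≤ p - 1 → bh n = bf (x + n * p) + σ (bf x)) ∧
    (∀ n : ℕ, p ≤ n → bh n = bf (x + n * p)) := by
  have hp := (Fact.out : p.Prime)
  have hp2 : 2 ≤ p := hp.two_le
  have hpne : (p : PadicInt p) ≠ 0 := Nat.cast_ne_zero.mpr hp.ne_zero
  obtain ⟨r, hr, hsec⟩ := hsec
  -- `bf x = f x`
  have hlogx : Nat.log p x = 0 := Nat.log_eq_zero_iff.mpr (Or.inl hx)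
  have hbfx : bf x = f (x : PadicInt p) := by
    have := hbf x
    rwa [hlogx, pow_zero, one_mul, vdpB, if_pos hx] at this
  -- `f x = r + p * h 0`
  have hfx : f (x : PadicInt p) = (r : PadicInt p) + p * h 0 := by
    have := hsec 0
    simpa using this
  obtain ⟨r', hr', hσx⟩ := hσ (bf x)
  have hh0 : h 0 = σ (bf x) := by
    apply digit_unique hr hr'
    rw [← hfx, ← hbfx]
    exact hσx
  have hbh0 : bh 0 = σ (bf x) := by
    have := hbh 0
    rw [Nat.log_zero_right, pow_zero, one_mul, vdpB, if_pos hp.pos] at this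
    rw [this]
    simpa using hh0
  -- key computation for `n ≥ 1`
  have key : ∀ n : ℕ, 1 ≤ n →
      (p : PadicInt p) ^ Nat.log p n * bf (x + n * p)
        = h (n : PadicInt p) - h ((n % p ^ Nat.log p n : ℕ) : PadicInt p) := by
    intro n hn
    set k := Nat.log p n with hk
    set m := n % p ^ k with hmdef
    have hk1 : p ^ k ≤ n := Nat.pow_log_le_self p (by omega)
    have hk2 : n < p ^ (k + 1) := Nat.lt_pow_succ_log_self hp.one_lt n
    have hpk : 0 < p ^ k := pow_pos hp.pos k
    have hm : m < p ^ k := Nat.mod_lt _ hpk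
    have hlog : Nat.log p (x + n * p) = k + 1 := by
      apply Nat.log_eq_of_pow_le_of_lt_pow
      · calc p ^ (k + 1) = p ^ k * p := (pow_succ p k)
          _ ≤ n * p := Nat.mul_le_mul_right p hk1
          _ ≤ x + n * p := Nat.le_add_left _ _
      · calc x + n * p < p + n * p := by omega
          _ = (1 + n) * p := by ring
          _ ≤ p ^ (k + 1) * p := Nat.mul_le_mul_right p (by omega)
          _ = p ^ (k + 2) := by rw [← pow_succ]
    have hdecomp : x + n * p = (x + m * p) + (n / p ^ k) * p ^ (k + 1) := by
      have h1 := Nat.mod_add_div n (p ^ k)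
      have : n * p = m * p + (n / p ^ k) * p ^ (k + 1) := by
        rw [pow_succ]
        conv_lhs => rw [← h1]
        ring
      omega
    have hxmp : x + m * p < p ^ (k + 1) := by
      calc x + m * p < p + m * p := by omega
        _ = (1 + m) * p := by ring
        _ ≤ p ^ k * p := Nat.mul_le_mul_right p (by omega)
        _ = p ^ (k + 1) := (pow_succ p k).symm
    have hmod : (x + n * p) % p ^ (k + 1) = x + m * p := by
      rw [hdecomp, Nat.add_mul_mod_self_right, Nat.mod_eq_of_lt hxmp]
    have hnp : ¬ (x + n * p < p) := by nlinarith
    have hB := hbf (x + n * p)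
    rw [vdpB, if_neg hnp, hlog, hmod] at hB
    have hc1 : ((x + n * p : ℕ) : PadicInt p) = (x : PadicInt p) + p * n := by
      push_cast; ring
    have hc2 : ((x + m * p : ℕ) : PadicInt p) = (x : PadicInt p) + p * m := by
      push_cast; ring
    rw [hc1, hc2, hsec, hsec] at hB
    have : (p : PadicInt p) * ((p : PadicInt p) ^ k * bf (x + n * p))
        = (p : PadicInt p) * (h (n : PadicInt p) - h ((m : ℕ) : PadicInt p)) := by
      rw [← mul_assoc, ← pow_succ']
      rw [hB]; ring
    exact mul_left_cancel₀ hpne this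
  refine ⟨hbh0, ?_, ?_⟩
  · intro n hn1 hn2
    have hnp : n < p := by omega
    have hlogn : Nat.log p n = 0 := Nat.log_eq_zero_iff.mpr (Or.inl hnp)
    have hbhn : bh n = h (n : PadicInt p) := by
      have := hbh n
      rwa [hlogn, pow_zero, one_mul, vdpB, if_pos hnp] at this
    have hkey := key n hn1
    rw [hlogn] at hkey
    simp only [pow_zero, one_mul, Nat.mod_one, Nat.cast_zero] at hkey
    rw [hbhn, hkey, hh0]
    ring
  · intro n hn
    have hn1 : 1 ≤ n := by omega
    have hnp : ¬ (n < p) := by omega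
    have hkey := key n hn1
    have hBh := hbh n
    rw [vdpB, if_neg hnp] at hBh
    have : (p : PadicInt p) ^ Nat.log p n * bh n
        = (p : PadicInt p) ^ Nat.log p n * bf (x + n * p) := by
      rw [hBh, hkey]
    exact mul_left_cancel₀ (pow_ne_zero _ hpne) this
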